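/- arXiv:1803.09347 — 4 statements merged into one kernel-verified Lean document; each statement's English description precedes it below -/
import Mathlib

section
/- For every probability measure Q on Ω that is equivalent to P, such that W is Q-integrable and D_KL(Q‖P) < ∞, one has ΔF ≤ E_Q[W] + β⁻¹ D_KL(Q‖P), and equality holds if and only if Q = P*. (This inequality is the paper's generalization of the second law of thermodynamics, eq. (2.47).) -/
open MeasureTheory Real

/-- Kullback-Leibler divergence `D_KL(Q ‖ P) = ∫ log (dQ/dP) dQ`. -/
noncomputable def klDiv' {Ω : Type*} [MeasurableSpace Ω] (Q P : Measure Ω) : ℝ :=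
  ∫ x, Real.log ((Q.rnDeriv P x).toReal) ∂Q

/-- Free energy difference `ΔF = -β⁻¹ ln ∫ e^{-βW} dP`. -/
noncomputable def deltaF {Ω : Type*} [MeasurableSpace Ω] (β : ℝ) (W : Ω → ℝ)
    (P : Measure Ω) : ℝ :=
  -β⁻¹ * Real.log (∫ x, Real.exp (-β * W x) ∂P)

/-- The optimal (zero-variance) tilted measure `P*` with `dP*/dP = e^{-β(W-ΔF)}`. -/
noncomputable def Pstar {Ω : Type*} [MeasurableSpace Ω] (β : ℝ) (W : Ω → ℝ)
    (P : Measure Ω) : Measure Ω :=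
  P.withDensity (fun x => ENNReal.ofReal (Real.exp (-β * (W x - deltaF β W P))))

/-- Gibbs' inequality with equality case. -/
lemma gibbs_aux {α : Type*} [MeasurableSpace α] (μ ν : Measure α)
    [IsProbabilityMeasure μ] [IsProbabilityMeasure ν]
    (hμν : μ ≪ ν) (hνμ : ν ≪ μ) (hint : Integrable (llr μ ν) μ) :
    0 ≤ ∫ x, llr μ ν x ∂μ ∧ (∫ x, llr μ ν x ∂μ = 0 ↔ μ = ν) := by
  set g : α → ℝ := fun x => (ν.rnDeriv μ x).toReal with hg
  have hg_int : Integrable g μ := Measure.integrable_toReal_rnDeriv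
  have hg_avg : ∫ x, g x ∂μ = 1 := by
    rw [Measure.integral_toReal_rnDeriv hνμ]; simp
  have hllr_eq : llr μ ν =ᵐ[μ] fun x => - Real.log (g x) := by
    filter_upwards [neg_llr hμν] with x hx
    have hx' : - llr μ ν x = llr ν μ x := hx
    show llr μ ν x = - llr ν μ x
    linarith
  have hlog_int : Integrable (fun x => Real.log (g x)) μ := by
    have h := (integrable_congr hllr_eq).mp hint
    exact h.neg.congr (Filter.Eventually.of_forall fun x => by simp)
  have hg_pos : ∀ᵐ x ∂μ, 0 < g x := by
    filter_upwards [hμν.ae_le (Measure.rnDeriv_pos hνμ), Measure.rnDeriv_lt_top ν μ]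
      with x h1 h2
    exact ENNReal.toReal_pos h1.ne' h2.ne
  have h_int_eq : ∫ x, llr μ ν x ∂μ = ∫ x, (g x - 1 - Real.log (g x)) ∂μ := by
    rw [integral_congr_ae hllr_eq]
    rw [integral_sub (show Integrable (fun x => g x - 1) μ from hg_int.sub (integrable_const 1))
        hlog_int,
      integral_sub hg_int (integrable_const 1), hg_avg]
    simp [integral_neg]
  have h_nonneg : ∀ᵐ x ∂μ, 0 ≤ g x - 1 - Real.log (g x) := by
    filter_upwards [hg_pos] with x hx
    nlinarith [Real.log_le_sub_one_of_pos hx]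
  have h_integrable : Integrable (fun x => g x - 1 - Real.log (g x)) μ :=
    (hg_int.sub (integrable_const 1)).sub hlog_int
  constructor
  · rw [h_int_eq]; exact integral_nonneg_of_ae h_nonneg
  constructor
  · intro h0
    rw [h_int_eq] at h0
    have hzero : (fun x => g x - 1 - Real.log (g x)) =ᵐ[μ] 0 :=
      (integral_eq_zero_iff_of_nonneg_ae h_nonneg h_integrable).mp h0
    have hgone : ν.rnDeriv μ =ᵐ[μ] 1 := by
      filter_upwards [hzero, hg_pos, Measure.rnDeriv_lt_top ν μ] with x hx hxpos hxlt
      have hx1 : g x = 1 := by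
        by_contra hne
        have := Real.log_lt_sub_one_of_pos hxpos hne
        simp only [Pi.zero_apply] at hx
        linarith
      have ht : (ν.rnDeriv μ x).toReal = 1 := hx1
      show ν.rnDeriv μ x = 1
      rw [← ENNReal.ofReal_toReal hxlt.ne, ht]
      simp
    have := Measure.withDensity_rnDeriv_eq ν μ hνμ
    rw [withDensity_congr_ae hgone, withDensity_one] at this
    exact this
  · rintro rfl
    have : llr μ μ =ᵐ[μ] fun _ => (0 : ℝ) := by
      filter_upwards [Measure.rnDeriv_self μ] with x hx
      simp [llr, hx]
    rw [integral_congr_ae this]; simp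

/-- Generalized second law of thermodynamics (paper eq. (2.47)). -/
theorem second_law_generalized
    {Ω : Type*} [MeasurableSpace Ω]
    (P : Measure Ω) [IsProbabilityMeasure P]
    (β : ℝ) (hβ : 0 < β)
    (W : Ω → ℝ) (hW : Measurable W)
    (hexp : Integrable (fun x => Real.exp (-β * W x)) P)
    (hWexp : Integrable (fun x => W x * Real.exp (-β * W x)) P)
    (Q : Measure Ω) [IsProbabilityMeasure Q]
    (hQP : Q ≪ P) (hPQ : P ≪ Q)
    (hWQ : Integrable W Q)
    (hKLfin : Integrable (fun x => Real.log ((Q.rnDeriv P x).toReal)) Q) :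
    deltaF β W P ≤ ∫ x, W x ∂Q + β⁻¹ * klDiv' Q P ∧
      (deltaF β W P = ∫ x, W x ∂Q + β⁻¹ * klDiv' Q P ↔ Q = Pstar β W P) := by
  have hβne : β ≠ 0 := hβ.ne'
  set f : Ω → ℝ := fun x => -β * W x with hf
  set Z : ℝ := ∫ x, Real.exp (-β * W x) ∂P with hZdef
  have hZpos : 0 < Z := integral_exp_pos hexp
  have hdF : deltaF β W P = -β⁻¹ * Real.log Z := rfl
  -- Pstar is the tilted measure
  have hPs : Pstar β W P = P.tilted f := by
    unfold Pstar Measure.tilted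
    congr 1
    funext x
    congr 1
    rw [show -β * (W x - deltaF β W P) = -β * W x - Real.log Z by
      rw [hdF]; field_simp; ring]
    rw [Real.exp_sub, Real.exp_log hZpos]
  have hprob : IsProbabilityMeasure (P.tilted f) := isProbabilityMeasure_tilted hexp
  have hKL' : Integrable (llr Q P) Q := hKLfin
  have hfQ : Integrable f Q := hWQ.const_mul (-β)
  have hQt : Q ≪ P.tilted f := hQP.trans (absolutelyContinuous_tilted hexp)
  have htQ : P.tilted f ≪ Q := (tilted_absolutelyContinuous P f).trans hPQ
  have hint : Integrable (llr Q (P.tilted f)) Q :=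
    integrable_llr_tilted_right hQP hfQ hKL' hexp
  have hI : ∫ x, llr Q (P.tilted f) x ∂Q
      = ∫ x, llr Q P x ∂Q - ∫ x, f x ∂Q + Real.log Z :=
    integral_llr_tilted_right hQP hfQ hexp hKL'
  have hfint : ∫ x, f x ∂Q = -β * ∫ x, W x ∂Q := by
    rw [hf]; exact integral_const_mul (-β) W
  obtain ⟨hge, hiff⟩ := gibbs_aux Q (P.tilted f) hQt htQ hint
  have key : ∫ x, W x ∂Q + β⁻¹ * klDiv' Q P - deltaF β W P
      = β⁻¹ * ∫ x, llr Q (P.tilted f) x ∂Q := by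
    rw [hI, hfint, hdF]
    have hk : klDiv' Q P = ∫ x, llr Q P x ∂Q := rfl
    rw [hk]
    field_simp
    ring
  constructor
  · nlinarith [mul_nonneg (inv_pos.mpr hβ).le hge]
  · rw [hPs, ← hiff]
    constructor
    · intro h
      have : β⁻¹ * ∫ x, llr Q (P.tilted f) x ∂Q = 0 := by linarith
      have := mul_eq_zero.mp this
      rcases this with h' | h'
      · exact absurd h' (inv_ne_zero hβne)
      · exact h'
    · intro h
      have : β⁻¹ * ∫ x, llr Q (P.tilted f) x ∂Q = 0 := by rw [h]; ring
      linarith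
end

section
/- For every probability measure Q on Ω that is equivalent to P, such that W is Q-integrable and D_KL(Q‖P) < ∞, the following identity holds: E_Q[W] + β⁻¹ D_KL(Q‖P) = ΔF + β⁻¹ D_KL(Q‖P*). (Paper eq. (2.54).) -/
open MeasureTheory

/-- Paper eq. (2.54): for every probability measure `Q` equivalent to `P` with `W`
`Q`-integrable and finite relative entropy,
`E_Q[W] + β⁻¹ D_KL(Q‖P) = ΔF + β⁻¹ D_KL(Q‖P*)`. -/
theorem work_entropy_identity
    {Ω : Type*} [MeasurableSpace Ω]
    (P : Measure Ω) [IsProbabilityMeasure P]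
    (β : ℝ) (hβ : 0 < β)
    (W : Ω → ℝ) (hW : Measurable W)
    (hexp : Integrable (fun x => Real.exp (-β * W x)) P)
    (hWexp : Integrable (fun x => W x * Real.exp (-β * W x)) P)
    (Q : Measure Ω) [IsProbabilityMeasure Q]
    (hQP : Q ≪ P) (hPQ : P ≪ Q)
    (hWQ : Integrable W Q)
    (hKLfin : Integrable (fun x => Real.log ((Q.rnDeriv P x).toReal)) Q) :
    ∫ x, W x ∂Q + β⁻¹ * klDiv' Q P
      = deltaF β W P + β⁻¹ * klDiv' Q (Pstar β W P) := by
  set Z : ℝ := ∫ x, Real.exp (-β * W x) ∂P with hZdef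
  have hβ' : (β : ℝ) ≠ 0 := hβ.ne'
  have hZpos : 0 < Z := integral_exp_pos hexp
  have hlogZ : Real.log Z = -β * deltaF β W P := by
    rw [deltaF, ← hZdef]; field_simp
  -- Pstar is the tilted measure
  have hPstar : Pstar β W P = P.tilted (fun x => -β * W x) := by
    rw [Pstar, Measure.tilted]
    congr 1
    funext x
    congr 1
    rw [← hZdef, mul_sub, Real.exp_sub, ← hlogZ, Real.exp_log hZpos]
  -- a.e. identity for the log of rnDeriv wrt Pstar
  have hpos : ∀ᵐ x ∂Q, 0 < Q.rnDeriv P x := Measure.rnDeriv_pos hQP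
  have hfin : ∀ᵐ x ∂Q, Q.rnDeriv P x < ⊤ := hQP.ae_le (Measure.rnDeriv_lt_top Q P)
  have hae : (fun x => Real.log ((Q.rnDeriv (Pstar β W P) x).toReal))
      =ᵐ[Q] fun x => β * W x + Real.log Z
        + Real.log ((Q.rnDeriv P x).toReal) := by
    have htilt := toReal_rnDeriv_tilted_right Q P (f := fun x => -β * W x) hexp
    filter_upwards [hQP.ae_le htilt, hpos, hfin] with x hx h0 hlt
    rw [← hZdef] at hx
    rw [hPstar, hx]
    have h1 : (Q.rnDeriv P x).toReal ≠ 0 := by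
      simp [ENNReal.toReal_eq_zero_iff, h0.ne', hlt.ne]
    rw [Real.log_mul (by positivity) h1, Real.log_mul (Real.exp_ne_zero _) hZpos.ne',
      Real.log_exp]
    ring_nf
  -- compute klDiv' Q Pstar
  have hK : klDiv' Q (Pstar β W P) = β * ∫ x, W x ∂Q + Real.log Z + klDiv' Q P := by
    have hint1 : Integrable (fun x => β * W x + Real.log Z) Q := by
      exact (hWQ.const_mul β).add (integrable_const _)
    rw [klDiv', integral_congr_ae hae,
      integral_add hint1 hKLfin,
      integral_add (hWQ.const_mul β) (integrable_const _),
      integral_const, integral_const_mul]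
    simp [klDiv']
  rw [hK, hlogZ]
  field_simp
  ring
end

section
/- The generator of the projected diffusion annihilates the reaction coordinate: for every γ ∈ {1,…,d} and every y ∈ ℝⁿ, −Σ_{i,j} (P(y)a(y))_{ij} ∂_jV(y) ∂_iξ_γ(y) + β⁻¹ Σ_{i,j} ∂_j((P a)_{ij})(y) ∂_iξ_γ(y) + β⁻¹ Σ_{i,j} (P(y)a(y))_{ij} ∂²ξ_γ/∂y_i∂y_j(y) = 0, i.e. 𝓛^⊥ ξ_γ ≡ 0 where 𝓛^⊥ = −(Pa)_{ij} ∂_jV ∂_i + β⁻¹ ∂_j(Pa)_{ij} ∂_i + β⁻¹ (Pa)_{ij} ∂²_{ij}. -/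
open Matrix

/-- Partial derivative `∂f/∂y_i` of a scalar function on `ℝⁿ`. -/
noncomputable def pd {ι : Type*} [Fintype ι] [DecidableEq ι]
    (f : (ι → ℝ) → ℝ) (i : ι) (y : ι → ℝ) : ℝ :=
  fderiv ℝ f y (Pi.single i 1)

/-- Jacobian matrix `∇ξ(y)`, the `n × d` matrix with entries `∂ξ_γ/∂y_i`. -/
noncomputable def jac {n d : ℕ} (ξ : (Fin n → ℝ) → (Fin d → ℝ)) (y : Fin n → ℝ) :
    Matrix (Fin n) (Fin d) ℝ :=
  fun i γ => pd (fun z => ξ z γ) i y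

/-- The projection matrix `P(y) = I − a∇ξ Ψ⁻¹ ∇ξᵀ` with `Ψ = ∇ξᵀ a ∇ξ`. -/
noncomputable def projMat {n d : ℕ} (ξ : (Fin n → ℝ) → (Fin d → ℝ))
    (a : (Fin n → ℝ) → Matrix (Fin n) (Fin n) ℝ) (y : Fin n → ℝ) :
    Matrix (Fin n) (Fin n) ℝ :=
  1 - a y * jac ξ y * ((jac ξ y)ᵀ * a y * jac ξ y)⁻¹ * (jac ξ y)ᵀ

section aux
variable {E : Type*} [NormedAddCommGroup E] [NormedSpace ℝ E]

lemma aux_prod {ι : Type*} (u : Finset ι) (f : ι → E → ℝ)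
    (h : ∀ i ∈ u, Differentiable ℝ (f i)) :
    Differentiable ℝ (fun y => ∏ i ∈ u, f i y) := by
  classical
  induction u using Finset.induction with
  | empty => simpa using differentiable_const (1 : ℝ)
  | @insert x s hx ih =>
    simp only [Finset.prod_insert hx]
    exact (h x (Finset.mem_insert_self x s)).mul
      (ih fun i hi => h i (Finset.mem_insert_of_mem hi))

lemma aux_det {m : Type*} [Fintype m] [DecidableEq m] {M : E → Matrix m m ℝ}
    (h : ∀ i j, Differentiable ℝ fun y => M y i j) :
    Differentiable ℝ fun y => (M y).det := by
  simp only [Matrix.det_apply']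
  exact Differentiable.fun_sum fun σ _ =>
    (aux_prod Finset.univ (fun i y => M y (σ i) i) fun i _ => h (σ i) i).const_mul _

lemma aux_adj {m : Type*} [Fintype m] [DecidableEq m] {M : E → Matrix m m ℝ}
    (h : ∀ i j, Differentiable ℝ fun y => M y i j) (i j : m) :
    Differentiable ℝ fun y => (M y).adjugate i j := by
  simp only [Matrix.adjugate_apply]
  apply aux_det
  intro i' j'
  simp only [Matrix.updateRow_apply]
  rcases eq_or_ne i' j with h' | h' <;> simp [h', differentiable_const, h i' j']

lemma aux_inv {m : Type*} [Fintype m] [DecidableEq m] {M : E → Matrix m m ℝ}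
    (h : ∀ i j, Differentiable ℝ fun y => M y i j)
    (hu : ∀ y, IsUnit (M y).det) (i j : m) :
    Differentiable ℝ fun y => (M y)⁻¹ i j := by
  have heq : (fun y => (M y)⁻¹ i j) = fun y => ((M y).det)⁻¹ * (M y).adjugate i j := by
    funext y
    rw [Matrix.inv_def, Ring.inverse_eq_inv', Matrix.smul_apply, smul_eq_mul]
  rw [heq]
  exact ((aux_det h).inv fun y => (hu y).ne_zero).mul (aux_adj h i j)

lemma aux_mul {m p q : Type*} [Fintype p]
    {M : E → Matrix m p ℝ} {N : E → Matrix p q ℝ}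
    (hM : ∀ i j, Differentiable ℝ fun y => M y i j)
    (hN : ∀ i j, Differentiable ℝ fun y => N y i j) (i : m) (j : q) :
    Differentiable ℝ fun y => (M y * N y) i j := by
  simp only [Matrix.mul_apply]
  exact Differentiable.fun_sum fun k _ => (hM i k).mul (hN k j)

end aux

/-- The generator `𝓛^⊥ = −(Pa)_{ij} ∂_jV ∂_i + β⁻¹ ∂_j(Pa)_{ij} ∂_i + β⁻¹ (Pa)_{ij} ∂²_{ij}`
of the projected diffusion annihilates the reaction coordinate: `𝓛^⊥ ξ_γ ≡ 0`. -/
theorem generator_annihilates_reaction_coordinate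
    (β : ℝ) (hβ : 0 < β)
    (n d : ℕ) (hd : 1 ≤ d) (hdn : d < n)
    (ξ : (Fin n → ℝ) → (Fin d → ℝ)) (hξ : ContDiff ℝ 2 ξ)
    (V : (Fin n → ℝ) → ℝ) (hV : ContDiff ℝ 1 V)
    (a : (Fin n → ℝ) → Matrix (Fin n) (Fin n) ℝ)
    (ha : ∀ i j, ContDiff ℝ 1 fun y => a y i j)
    (ha_symm : ∀ y, (a y).IsSymm) (ha_pd : ∀ y, (a y).PosDef)
    (hΨ : ∀ y, IsUnit ((jac ξ y)ᵀ * a y * jac ξ y)) :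
    ∀ (γ : Fin d) (y : Fin n → ℝ),
      -(∑ i, ∑ j, (projMat ξ a y * a y) i j * pd V j y * pd (fun z => ξ z γ) i y)
        + β⁻¹ * ∑ i, ∑ j,
            pd (fun z => (projMat ξ a z * a z) i j) j y * pd (fun z => ξ z γ) i y
        + β⁻¹ * ∑ i, ∑ j,
            (projMat ξ a y * a y) i j * pd (fun z => pd (fun w => ξ w γ) i z) j y
      = 0 := by
  intro γ y
  -- differentiability of the partial derivatives of ξ
  have hpdd : ∀ (δ : Fin d) (i : Fin n),
      Differentiable ℝ fun z => pd (fun w => ξ w δ) i z := by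
    intro δ i
    have h1 : ContDiff ℝ 2 fun z => ξ z δ := contDiff_pi.mp hξ δ
    have h2 : ContDiff ℝ 1 (fderiv ℝ fun z => ξ z δ) := h1.fderiv_right (by norm_num)
    exact (h2.clm_apply contDiff_const).differentiable one_ne_zero
  have hJd : ∀ (i : Fin n) (δ : Fin d), Differentiable ℝ fun z => jac ξ z i δ :=
    fun i δ => hpdd δ i
  have had : ∀ i j, Differentiable ℝ fun z => a z i j :=
    fun i j => (ha i j).differentiable one_ne_zero
  have hJTd : ∀ (δ : Fin d) (i : Fin n), Differentiable ℝ fun z => (jac ξ z)ᵀ δ i := by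
    intro δ i; simpa [Matrix.transpose_apply] using hJd i δ
  have hΨd : ∀ δ δ', Differentiable ℝ fun z => ((jac ξ z)ᵀ * a z * jac ξ z) δ δ' :=
    aux_mul (aux_mul hJTd had) hJd
  have hΨdet : ∀ z, IsUnit ((jac ξ z)ᵀ * a z * jac ξ z).det :=
    fun z => (Matrix.isUnit_iff_isUnit_det _).mp (hΨ z)
  have hinvd : ∀ δ δ', Differentiable ℝ fun z => (((jac ξ z)ᵀ * a z * jac ξ z)⁻¹) δ δ' :=
    aux_inv hΨd hΨdet
  have hPd : ∀ i j, Differentiable ℝ fun z => projMat ξ a z i j := by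
    intro i j
    have h1 : Differentiable ℝ fun z =>
        (a z * jac ξ z * ((jac ξ z)ᵀ * a z * jac ξ z)⁻¹ * (jac ξ z)ᵀ) i j :=
      aux_mul (aux_mul (aux_mul had hJd) hinvd) hJTd i j
    have h2 := (differentiable_const ((1 : Matrix (Fin n) (Fin n) ℝ) i j)).sub h1
    simpa [projMat, Matrix.sub_apply] using h2
  have hGd : ∀ i j, Differentiable ℝ fun z => (projMat ξ a z * a z) i j :=
    aux_mul hPd had
  -- the key algebraic identity : ∇ξᵀ (P a) = 0
  have hkey : ∀ z, (jac ξ z)ᵀ * (projMat ξ a z * a z) = 0 := by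
    intro z
    have h1 : ((jac ξ z)ᵀ * a z * jac ξ z) * ((jac ξ z)ᵀ * a z * jac ξ z)⁻¹ = 1 :=
      Matrix.mul_nonsing_inv _ (hΨdet z)
    have h2 : (jac ξ z)ᵀ * (projMat ξ a z * a z)
        = ((jac ξ z)ᵀ - ((jac ξ z)ᵀ * a z * jac ξ z)
            * ((jac ξ z)ᵀ * a z * jac ξ z)⁻¹ * (jac ξ z)ᵀ) * a z := by
      simp only [projMat, Matrix.sub_mul, Matrix.mul_sub, Matrix.one_mul, Matrix.mul_one,
        ← Matrix.mul_assoc]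
    rw [h2, h1, Matrix.one_mul, sub_self, Matrix.zero_mul]
  have hkey' : ∀ (z : Fin n → ℝ) (j : Fin n),
      ∑ i, (projMat ξ a z * a z) i j * pd (fun w => ξ w γ) i z = 0 := by
    intro z j
    have h0 := congrFun (congrFun (hkey z) γ) j
    simp only [Matrix.mul_apply, Matrix.transpose_apply, Matrix.zero_apply] at h0
    rw [← h0]
    refine Finset.sum_congr rfl fun i _ => ?_
    rw [mul_comm]
    rfl
  -- first sum vanishes
  have hS1 : ∑ i, ∑ j, (projMat ξ a y * a y) i j * pd V j y * pd (fun z => ξ z γ) i y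
      = 0 := by
    rw [Finset.sum_comm]
    refine Finset.sum_eq_zero fun j _ => ?_
    have h3 : ∑ i, (projMat ξ a y * a y) i j * pd V j y * pd (fun z => ξ z γ) i y
        = pd V j y * ∑ i, (projMat ξ a y * a y) i j * pd (fun w => ξ w γ) i y := by
      rw [Finset.mul_sum]
      exact Finset.sum_congr rfl fun i _ => by ring
    rw [h3, hkey' y j, mul_zero]
  -- product rule applied to the identically-zero function
  have hprod : ∀ j : Fin n,
      ∑ i, (pd (fun z => (projMat ξ a z * a z) i j) j y * pd (fun z => ξ z γ) i y
        + (projMat ξ a y * a y) i j * pd (fun z => pd (fun w => ξ w γ) i z) j y) = 0 := by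
    intro j
    have hz : pd (fun z => ∑ i, (projMat ξ a z * a z) i j * pd (fun w => ξ w γ) i z) j y
        = 0 := by
      rw [show (fun z => ∑ i, (projMat ξ a z * a z) i j * pd (fun w => ξ w γ) i z)
          = fun _ => (0 : ℝ) from funext fun z => hkey' z j]
      simp [pd]
    have hF : fderiv ℝ
        (fun z => ∑ i, (projMat ξ a z * a z) i j * pd (fun w => ξ w γ) i z) y
        = ∑ i, fderiv ℝ (fun z => (projMat ξ a z * a z) i j * pd (fun w => ξ w γ) i z) y :=
      fderiv_fun_sum fun i _ => ((hGd i j) y).mul ((hpdd γ i) y)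
    rw [← hz]
    show _ = fderiv ℝ _ y (Pi.single j 1)
    rw [hF, ContinuousLinearMap.sum_apply]
    refine Finset.sum_congr rfl fun i _ => ?_
    rw [fderiv_fun_mul ((hGd i j) y) ((hpdd γ i) y)]
    simp only [ContinuousLinearMap.add_apply, ContinuousLinearMap.smul_apply, smul_eq_mul]
    show pd (fun z => (projMat ξ a z * a z) i j) j y * pd (fun z => ξ z γ) i y
        + (projMat ξ a y * a y) i j * pd (fun z => pd (fun w => ξ w γ) i z) j y
      = (projMat ξ a y * a y) i j * pd (fun z => pd (fun w => ξ w γ) i z) j y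
        + pd (fun w => ξ w γ) i y * pd (fun z => (projMat ξ a z * a z) i j) j y
    ring
  -- combine the second and third sums
  have hS23 : (∑ i, ∑ j,
        pd (fun z => (projMat ξ a z * a z) i j) j y * pd (fun z => ξ z γ) i y)
      + ∑ i, ∑ j,
        (projMat ξ a y * a y) i j * pd (fun z => pd (fun w => ξ w γ) i z) j y = 0 := by
    rw [← Finset.sum_add_distrib]
    have h4 : ∀ i : Fin n, (∑ j,
          pd (fun z => (projMat ξ a z * a z) i j) j y * pd (fun z => ξ z γ) i y)
        + ∑ j, (projMat ξ a y * a y) i j * pd (fun z => pd (fun w => ξ w γ) i z) j y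
        = ∑ j, (pd (fun z => (projMat ξ a z * a z) i j) j y * pd (fun z => ξ z γ) i y
          + (projMat ξ a y * a y) i j * pd (fun z => pd (fun w => ξ w γ) i z) j y) :=
      fun i => (Finset.sum_add_distrib).symm
    rw [Finset.sum_congr rfl fun i _ => h4 i, Finset.sum_comm]
    exact Finset.sum_eq_zero fun j _ => hprod j
  rw [hS1, neg_zero, zero_add, ← mul_add, hS23, mul_zero]
end

section
/- Conjugation identity for the protocol generator (key computation in the proof of the fluctuation theorem, eq. (2.38) of the paper): setting ω := e^{-βV} g and 𝓛₂φ := f·∇φ + ε Σ_{i,j}(ααᵀ)_{ij} ∂²_{ij}φ, one has at every point of ℝᵐ: e^{-βV} 𝓛₂ g = 𝓛₂ ω + β (𝓛₂ V) ω + 2εβ (αᵀ∇V)·(αᵀ∇ω) + ε β² |αᵀ∇V|² ω. -/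
open Matrix

/-- The protocol generator `𝓛₂φ = f·∇φ + ε (ααᵀ):∇²φ`. -/
noncomputable def genL2 {m d₂ : ℕ} (ε : ℝ)
    (f : (Fin m → ℝ) → (Fin m → ℝ))
    (α : (Fin m → ℝ) → Matrix (Fin m) (Fin d₂) ℝ)
    (φ : (Fin m → ℝ) → ℝ) (y : Fin m → ℝ) : ℝ :=
  (∑ i, f y i * pd φ i y)
    + ε * ∑ i, ∑ j, (α y * (α y)ᵀ) i j * pd (fun z => pd φ i z) j y

section Aux

variable {ι : Type*} [Fintype ι] [DecidableEq ι]

lemma pd_contDiff' {f : (ι → ℝ) → ℝ} (hf : ContDiff ℝ 2 f) (i : ι) :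
    ContDiff ℝ 1 (pd f i) :=
  (hf.fderiv_right (by norm_num)).clm_apply contDiff_const

lemma pd_mul' {a b : (ι → ℝ) → ℝ} {y : ι → ℝ} (ha : DifferentiableAt ℝ a y)
    (hb : DifferentiableAt ℝ b y) (i : ι) :
    pd (fun z => a z * b z) i y = pd a i y * b y + a y * pd b i y := by
  unfold pd
  rw [fderiv_fun_mul ha hb]
  simp only [ContinuousLinearMap.add_apply, ContinuousLinearMap.smul_apply, smul_eq_mul]
  ring

lemma pd_exp' {y : ι → ℝ} (β : ℝ) {V : (ι → ℝ) → ℝ} (hV : DifferentiableAt ℝ V y) (i : ι) :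
    pd (fun z => Real.exp (-β * V z)) i y
      = -β * pd V i y * Real.exp (-β * V y) := by
  unfold pd
  rw [fderiv_exp (hV.const_mul _), fderiv_const_mul hV]
  simp
  ring

lemma pd_sub' {a b : (ι → ℝ) → ℝ} {y : ι → ℝ} (ha : DifferentiableAt ℝ a y)
    (hb : DifferentiableAt ℝ b y) (i : ι) :
    pd (fun z => a z - b z) i y = pd a i y - pd b i y := by
  unfold pd; rw [fderiv_fun_sub ha hb]; simp

lemma pd_const_mul' {a : (ι → ℝ) → ℝ} {y : ι → ℝ} (c : ℝ) (ha : DifferentiableAt ℝ a y)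
    (i : ι) :
    pd (fun z => c * a z) i y = c * pd a i y := by
  unfold pd; rw [fderiv_const_mul ha]; simp

omit [DecidableEq ι] in
lemma expV_contDiff' {β : ℝ} {V : (ι → ℝ) → ℝ} (hV : ContDiff ℝ 2 V) :
    ContDiff ℝ 2 (fun z => Real.exp (-β * V z)) :=
  Real.contDiff_exp.comp (contDiff_const.mul hV)

lemma pd_omega' {β : ℝ} {V g : (ι → ℝ) → ℝ} (hV : ContDiff ℝ 2 V) (hg : ContDiff ℝ 2 g)
    (i : ι) (z : ι → ℝ) :
    pd (fun w => Real.exp (-β * V w) * g w) i z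
      = Real.exp (-β * V z) * (pd g i z - β * (pd V i z * g z)) := by
  rw [pd_mul' ((expV_contDiff' hV).differentiable (by norm_num) z)
      (hg.differentiable (by norm_num) z) i, pd_exp' β (hV.differentiable (by norm_num) z) i]
  ring

lemma pd_pd_omega' {β : ℝ} {V g : (ι → ℝ) → ℝ} (hV : ContDiff ℝ 2 V) (hg : ContDiff ℝ 2 g)
    (i j : ι) (y : ι → ℝ) :
    pd (fun z => pd (fun w => Real.exp (-β * V w) * g w) i z) j y
      = Real.exp (-β * V y) * (pd (fun z => pd g i z) j y
          - β * (pd (fun z => pd V i z) j y * g y)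
          - β * (pd V i y * pd g j y) - β * (pd V j y * pd g i y)
          + β ^ 2 * (pd V i y * pd V j y * g y)) := by
  have hgi : DifferentiableAt ℝ (pd g i) y := (pd_contDiff' hg i).differentiable (by norm_num) y
  have hVi : DifferentiableAt ℝ (pd V i) y := (pd_contDiff' hV i).differentiable (by norm_num) y
  have hgy : DifferentiableAt ℝ g y := hg.differentiable (by norm_num) y
  have hVy : DifferentiableAt ℝ V y := hV.differentiable (by norm_num) y
  have hEy : DifferentiableAt ℝ (fun w => Real.exp (-β * V w)) y :=
    (expV_contDiff' hV).differentiable (by norm_num) y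
  have h1 : (fun z => pd (fun w => Real.exp (-β * V w) * g w) i z)
      = fun z => Real.exp (-β * V z) * (pd g i z - β * (pd V i z * g z)) :=
    funext fun z => pd_omega' hV hg i z
  rw [h1, pd_mul' (b := fun z => pd g i z - β * (pd V i z * g z)) hEy (hgi.sub ((hVi.mul hgy).const_mul β)) j, pd_exp' β hVy j,
    pd_sub' (b := fun z => β * (pd V i z * g z)) hgi ((hVi.mul hgy).const_mul β) j,
    pd_const_mul' (a := fun z => pd V i z * g z) β (hVi.mul hgy) j,
    pd_mul' hVi hgy j]
  show _ = Real.exp _ * (pd (pd g i) j y - _ - _ - _ + _)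
  ring

end Aux

lemma tri' {m d₂ : ℕ} (α : Fin m → Fin d₂ → ℝ)
    (A : Fin m → Fin m → ℝ) (hA : ∀ i j, A i j = ∑ k, α i k * α j k)
    (X Y : Fin m → ℝ) :
    ∑ k, (∑ i, α i k * X i) * (∑ j, α j k * Y j)
      = ∑ i, ∑ j, A i j * (X i * Y j) := by
  simp_rw [Finset.sum_mul_sum]
  rw [Finset.sum_comm]
  apply Finset.sum_congr rfl; intro i _
  rw [Finset.sum_comm]
  apply Finset.sum_congr rfl; intro j _
  rw [hA, Finset.sum_mul]
  apply Finset.sum_congr rfl; intro k _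
  ring

lemma key' {m d₂ : ℕ} (E β ε gy : ℝ)
    (F G Vv : Fin m → ℝ) (α : Fin m → Fin d₂ → ℝ) (GH VH : Fin m → Fin m → ℝ)
    (A : Fin m → Fin m → ℝ) (hA : ∀ i j, A i j = ∑ k, α i k * α j k) :
    E * ((∑ i, F i * G i) + ε * ∑ i, ∑ j, A i j * GH i j)
      = ((∑ i, F i * (E * (G i - β * (Vv i * gy))))
          + ε * ∑ i, ∑ j, A i j * (E * (GH i j - β * (VH i j * gy)
              - β * (Vv i * G j) - β * (Vv j * G i) + β ^ 2 * (Vv i * Vv j * gy))))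
        + β * ((∑ i, F i * Vv i) + ε * ∑ i, ∑ j, A i j * VH i j) * (E * gy)
        + 2 * ε * β * (∑ k, (∑ i, α i k * Vv i) * (∑ i, α i k * (E * (G i - β * (Vv i * gy)))))
        + ε * β ^ 2 * (∑ k, (∑ i, α i k * Vv i) ^ 2) * (E * gy) := by
  have h1 : (∑ i, F i * (E * (G i - β * (Vv i * gy))))
      = E * (∑ i, F i * G i) - β * E * gy * (∑ i, F i * Vv i) := by
    rw [show (∑ i, F i * (E * (G i - β * (Vv i * gy))))
        = ∑ i, (E * (F i * G i) - β * E * gy * (F i * Vv i)) from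
      Finset.sum_congr rfl fun i _ => by ring]
    rw [Finset.sum_sub_distrib, ← Finset.mul_sum, ← Finset.mul_sum]
  have h2 : (∑ i, ∑ j, A i j * (E * (GH i j - β * (VH i j * gy)
        - β * (Vv i * G j) - β * (Vv j * G i) + β ^ 2 * (Vv i * Vv j * gy))))
      = E * (∑ i, ∑ j, A i j * GH i j) - β * E * gy * (∑ i, ∑ j, A i j * VH i j)
        - β * E * (∑ i, ∑ j, A i j * (Vv i * G j))
        - β * E * (∑ i, ∑ j, A i j * (Vv j * G i))
        + β ^ 2 * E * gy * (∑ i, ∑ j, A i j * (Vv i * Vv j)) := by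
    rw [show (∑ i, ∑ j, A i j * (E * (GH i j - β * (VH i j * gy)
          - β * (Vv i * G j) - β * (Vv j * G i) + β ^ 2 * (Vv i * Vv j * gy))))
        = ∑ i, ∑ j, (E * (A i j * GH i j) - β * E * gy * (A i j * VH i j)
          - β * E * (A i j * (Vv i * G j)) - β * E * (A i j * (Vv j * G i))
          + β ^ 2 * E * gy * (A i j * (Vv i * Vv j))) from
      Finset.sum_congr rfl fun i _ => Finset.sum_congr rfl fun j _ => by ring]
    simp only [Finset.sum_sub_distrib, Finset.sum_add_distrib, ← Finset.mul_sum]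
  have hswap : (∑ i, ∑ j, A i j * (Vv j * G i)) = ∑ i, ∑ j, A i j * (Vv i * G j) := by
    rw [Finset.sum_comm]
    apply Finset.sum_congr rfl; intro i _
    apply Finset.sum_congr rfl; intro j _
    rw [hA, hA]
    rw [show (∑ k, α j k * α i k) = ∑ k, α i k * α j k from
      Finset.sum_congr rfl fun k _ => mul_comm _ _]
    try ring
  have h4 : (∑ k, (∑ i, α i k * Vv i) * (∑ i, α i k * (E * (G i - β * (Vv i * gy)))))
      = E * (∑ i, ∑ j, A i j * (Vv i * G j))
        - β * E * gy * (∑ i, ∑ j, A i j * (Vv i * Vv j)) := by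
    have hbody : ∀ k, (∑ i, α i k * (E * (G i - β * (Vv i * gy))))
        = E * (∑ i, α i k * G i) - β * E * gy * (∑ i, α i k * Vv i) := by
      intro k
      rw [show (∑ i, α i k * (E * (G i - β * (Vv i * gy))))
          = ∑ i, (E * (α i k * G i) - β * E * gy * (α i k * Vv i)) from
        Finset.sum_congr rfl fun i _ => by ring]
      rw [Finset.sum_sub_distrib, ← Finset.mul_sum, ← Finset.mul_sum]
    simp_rw [hbody]
    rw [show (∑ k, (∑ i, α i k * Vv i) * (E * (∑ i, α i k * G i)
          - β * E * gy * (∑ i, α i k * Vv i)))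
        = ∑ k, (E * ((∑ i, α i k * Vv i) * (∑ j, α j k * G j))
          - β * E * gy * ((∑ i, α i k * Vv i) * (∑ j, α j k * Vv j))) from
      Finset.sum_congr rfl fun k _ => by ring]
    rw [Finset.sum_sub_distrib, ← Finset.mul_sum, ← Finset.mul_sum,
      tri' α A hA Vv G, tri' α A hA Vv Vv]
  have h5 : (∑ k, (∑ i, α i k * Vv i) ^ 2) = ∑ i, ∑ j, A i j * (Vv i * Vv j) := by
    rw [← tri' α A hA Vv Vv]
    apply Finset.sum_congr rfl; intro k _; ring
  rw [h1, h2, hswap, h4, h5]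
  ring

/-- Conjugation identity for the protocol generator (paper eq. (2.38)): with
`ω = e^{-βV} g`, one has
`e^{-βV} 𝓛₂g = 𝓛₂ω + β(𝓛₂V)ω + 2εβ (αᵀ∇V)·(αᵀ∇ω) + εβ²|αᵀ∇V|² ω`. -/
theorem conjugation_identity_protocol
    (β ε : ℝ) (hβ : 0 < β) (hε : 0 ≤ ε)
    (m d₂ : ℕ) (hm : 1 ≤ m) (hd₂ : 1 ≤ d₂)
    (V g : (Fin m → ℝ) → ℝ) (hV : ContDiff ℝ 2 V) (hg : ContDiff ℝ 2 g)
    (f : (Fin m → ℝ) → (Fin m → ℝ)) (hf : Continuous f)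
    (α : (Fin m → ℝ) → Matrix (Fin m) (Fin d₂) ℝ) (hα : Continuous α) :
    ∀ y : Fin m → ℝ,
      Real.exp (-β * V y) * genL2 ε f α g y
        = genL2 ε f α (fun z => Real.exp (-β * V z) * g z) y
          + β * genL2 ε f α V y * (Real.exp (-β * V y) * g y)
          + 2 * ε * β * (∑ k, (∑ i, α y i k * pd V i y)
              * (∑ i, α y i k * pd (fun z => Real.exp (-β * V z) * g z) i y))
          + ε * β ^ 2 * (∑ k, (∑ i, α y i k * pd V i y) ^ 2)
              * (Real.exp (-β * V y) * g y) := by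
  intro y
  have hA : ∀ i j, (α y * (α y)ᵀ) i j = ∑ k, α y i k * α y j k := by
    intro i j
    simp [Matrix.mul_apply, Matrix.transpose_apply]
  unfold genL2
  simp only [pd_pd_omega' hV hg]
  simp only [pd_omega' hV hg]
  exact key' (Real.exp (-β * V y)) β ε (g y) (fun i => f y i) (fun i => pd g i y)
    (fun i => pd V i y) (fun i k => α y i k)
    (fun i j => pd (fun z => pd g i z) j y) (fun i j => pd (fun z => pd V i z) j y)
    (fun i j => (α y * (α y)ᵀ) i j) hA
end
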